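/- Let S ⊆ ℝ^n be a compact set and let g ∈ ℝ[X_1,…,X_n] be strictly quasiconcave on S. Then there exists λ > 0 such that the matrix λ ∇g(x) (∇g(x))ᵀ − Hess g(x) is positive definite for every x ∈ S. -/

import Mathlib

open MvPolynomial Matrix

noncomputable section

/-- The gradient `∇g(x)` of a polynomial `g` at a point `x`. -/
def gradEval {n : ℕ} (g : MvPolynomial (Fin n) ℝ) (x : Fin n → ℝ) : Fin n → ℝ :=
  fun i => eval x (pderiv i g)

/-- The Hessian `(Hess g)(x)` of a polynomial `g` at a point `x`. -/
def hessEval {n : ℕ} (g : MvPolynomial (Fin n) ℝ) (x : Fin n → ℝ) :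
    Matrix (Fin n) (Fin n) ℝ :=
  Matrix.of fun i j => eval x (pderiv i (pderiv j g))

/-- `g` is strictly quasiconcave at `x`: `vᵀ (Hess g(x)) v < 0` for every `v ≠ 0`
orthogonal to `∇g(x)`. -/
def StrictlyQuasiconcaveAt {n : ℕ} (g : MvPolynomial (Fin n) ℝ) (x : Fin n → ℝ) : Prop :=
  ∀ v : Fin n → ℝ, v ≠ 0 → gradEval g x ⬝ᵥ v = 0 → v ⬝ᵥ (hessEval g x) *ᵥ v < 0

lemma rank_one_quad {n : ℕ} (w v : Fin n → ℝ) :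
    v ⬝ᵥ (Matrix.of fun i j => w i * w j) *ᵥ v = (w ⬝ᵥ v) ^ 2 := by
  simp only [dotProduct, mulVec, Matrix.of_apply, sq]
  rw [Finset.sum_mul_sum]
  refine Finset.sum_congr rfl fun i _ => ?_
  rw [Finset.mul_sum]
  exact Finset.sum_congr rfl fun j _ => by ring


theorem stmt_7 {n : ℕ} (S : Set (Fin n → ℝ)) (hS : IsCompact S)
    (g : MvPolynomial (Fin n) ℝ) (hqc : ∀ x ∈ S, StrictlyQuasiconcaveAt g x) :
    ∃ l : ℝ, 0 < l ∧ ∀ x ∈ S, ∀ v : Fin n → ℝ, v ≠ 0 →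
      0 < v ⬝ᵥ (l • (Matrix.of fun i j => gradEval g x i * gradEval g x j) -
        hessEval g x) *ᵥ v := by
  classical
  set A : (Fin n → ℝ) × (Fin n → ℝ) → ℝ := fun p => (gradEval g p.1 ⬝ᵥ p.2) ^ 2 with hA
  set B : (Fin n → ℝ) × (Fin n → ℝ) → ℝ := fun p => p.2 ⬝ᵥ (hessEval g p.1) *ᵥ p.2 with hB
  have hAcont : Continuous A := by
    apply Continuous.pow
    simp only [dotProduct, gradEval]
    exact continuous_finset_sum _ fun i _ =>
      ((MvPolynomial.continuous_eval (pderiv i g)).comp continuous_fst).mul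
        ((continuous_apply i).comp continuous_snd)
  have hBcont : Continuous B := by
    unfold B
    simp only [dotProduct, mulVec, hessEval, Matrix.of_apply]
    refine continuous_finset_sum _ fun i _ => Continuous.mul
      ((continuous_apply i).comp continuous_snd) ?_
    exact continuous_finset_sum _ fun j _ =>
      ((MvPolynomial.continuous_eval (pderiv i (pderiv j g))).comp continuous_fst).mul
        ((continuous_apply j).comp continuous_snd)
  set K : Set ((Fin n → ℝ) × (Fin n → ℝ)) := S ×ˢ Metric.sphere 0 1 with hK
  have hKc : IsCompact K := hS.prod (isCompact_sphere 0 1)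
  set U : ℕ → Set ((Fin n → ℝ) × (Fin n → ℝ)) := fun m => {p | 0 < (m : ℝ) * A p - B p}
    with hU
  have hUopen : ∀ m, IsOpen (U m) :=
    fun m => isOpen_lt continuous_const (((continuous_const.mul hAcont)).sub hBcont)
  have hcov : K ⊆ ⋃ m, U m := by
    rintro ⟨x, v⟩ ⟨hx, hv⟩
    have hv1 : ‖v‖ = 1 := by simpa using hv
    have hvne : v ≠ 0 := by intro h; rw [h] at hv1; simp at hv1
    have hApos : 0 ≤ A (x, v) := sq_nonneg _
    rcases eq_or_lt_of_le hApos with h0 | hpos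
    · -- A = 0, so B < 0
      have hdot : gradEval g x ⬝ᵥ v = 0 := by
        have := h0.symm
        simpa [hA, pow_eq_zero_iff] using this
      have hBneg : B (x, v) < 0 := hqc x hx v hvne hdot
      refine Set.mem_iUnion.2 ⟨0, ?_⟩
      simp [hU, ← h0]
      linarith
    · -- A > 0
      obtain ⟨m, hm⟩ := exists_nat_gt (B (x, v) / A (x, v))
      refine Set.mem_iUnion.2 ⟨m, ?_⟩
      have : B (x, v) < m * A (x, v) := by
        rwa [div_lt_iff₀ hpos] at hm
      simp only [hU, Set.mem_setOf_eq]
      linarith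
  obtain ⟨t, ht⟩ := hKc.elim_finite_subcover U hUopen hcov
  refine ⟨(t.sup id : ℕ) + 1, by positivity, ?_⟩
  intro x hx v hvne
  have hvnorm : ‖v‖ ≠ 0 := norm_ne_zero_iff.2 hvne
  set u : Fin n → ℝ := ‖v‖⁻¹ • v with hu
  have hunorm : ‖u‖ = 1 := by
    rw [hu, norm_smul, norm_inv, norm_norm, inv_mul_cancel₀ hvnorm]
  have hmem : (x, u) ∈ K := ⟨hx, by simpa using hunorm⟩
  obtain ⟨m, hmt, hmU⟩ := Set.mem_iUnion₂.1 (ht hmem)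
  have hmU' : 0 < (m : ℝ) * A (x, u) - B (x, u) := hmU
  set l : ℝ := (t.sup id : ℕ) + 1 with hl
  have hml : (m : ℝ) ≤ l := by
    have : m ≤ t.sup id := Finset.le_sup (f := id) hmt
    have h2 : (m : ℝ) ≤ (t.sup id : ℕ) := by exact_mod_cast this
    linarith
  have hlpos : 0 < l * A (x, u) - B (x, u) := by
    have : (m : ℝ) * A (x, u) ≤ l * A (x, u) :=
      mul_le_mul_of_nonneg_right hml (sq_nonneg _)
    linarith
  have hveq : v = ‖v‖ • u := by
    rw [hu, smul_smul, mul_inv_cancel₀ hvnorm, one_smul]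
  have key : v ⬝ᵥ (l • (Matrix.of fun i j => gradEval g x i * gradEval g x j) -
      hessEval g x) *ᵥ v = ‖v‖ ^ 2 * (l * A (x, u) - B (x, u)) := by
    conv_lhs => rw [hveq]
    rw [smul_dotProduct, mulVec_smul, dotProduct_smul, smul_eq_mul, smul_eq_mul, ← mul_assoc,
      ← sq]
    congr 1
    rw [sub_mulVec, dotProduct_sub, smul_mulVec, dotProduct_smul, smul_eq_mul,
      rank_one_quad]
  rw [key]
  have : 0 < ‖v‖ ^ 2 := by positivity
  exact mul_pos this hlpos
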